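/- Let L be a finite lattice and f : L → R a function into a commutative ring. Define the matrix M indexed by L with entries M(a,b) = f(a ∨ b). Then det M = Π_{a ∈ L} ( Σ_{c ≥ a} μ(a,c)·f(c) ), where μ is the Möbius function of L. -/
import Mathlib

open Finset Matrix

section
variable {L : Type*} [Fintype L] [Lattice L] [DecidableEq L]
    [LocallyFiniteOrder L] [DecidableRel ((· ≤ ·) : L → L → Prop)]
    {R : Type*} [CommRing R]

set_option linter.unusedSectionVars false in
/-- The zeta matrix of a finite poset has determinant `1`. -/
lemma zeta_det_one : (Matrix.of fun a c : L => if a ≤ c then (1:R) else 0).det = 1 := by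
  classical
  set b : L → LinearExtension L := fun x => toLinearExtension x
  have hinj : Function.Injective b := fun x y h => h
  have hbt : Matrix.BlockTriangular (Matrix.of fun a c : L => if a ≤ c then (1:R) else 0) b := by
    intro i j hij
    simp only [Matrix.of_apply]
    rw [if_neg]
    intro hle
    exact absurd (toLinearExtension.monotone hle) (not_le.2 hij)
  rw [hbt.det]
  refine Finset.prod_eq_one fun k hk => ?_
  obtain ⟨a₀, -, rfl⟩ := Finset.mem_image.1 hk
  haveI : Unique {i // b i = b a₀} := ⟨⟨⟨a₀, rfl⟩⟩, fun j => Subtype.ext (hinj j.2)⟩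
  rw [Matrix.det_unique]
  simp [Matrix.toSquareBlock, Matrix.toSquareBlockProp]

/-- Möbius inversion in the form needed for Lindström's theorem. -/
lemma key_inv (f : L → R) (x : L) :
    (∑ c ∈ univ.filter (x ≤ ·), ∑ d ∈ univ.filter (c ≤ ·), IncidenceAlgebra.mu R c d * f d)
      = f x := by
  classical
  have step1 : ∀ (c : L), (∑ d ∈ univ.filter (c ≤ ·), IncidenceAlgebra.mu R c d * f d)
      = ∑ d ∈ univ, if c ≤ d then IncidenceAlgebra.mu R c d * f d else 0 := by
    intro c; rw [Finset.sum_filter]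
  calc (∑ c ∈ univ.filter (x ≤ ·), ∑ d ∈ univ.filter (c ≤ ·), IncidenceAlgebra.mu R c d * f d)
      = ∑ c ∈ univ, ∑ d ∈ univ, if x ≤ c ∧ c ≤ d then IncidenceAlgebra.mu R c d * f d else 0 := by
        rw [Finset.sum_filter]
        refine Finset.sum_congr rfl fun c _ => ?_
        rw [step1]
        split_ifs with h
        · exact Finset.sum_congr rfl fun d _ => by simp [h]
        · exact (Finset.sum_eq_zero fun d _ => by simp [h]).symm
    _ = ∑ d ∈ univ, ∑ c ∈ univ, if x ≤ c ∧ c ≤ d then IncidenceAlgebra.mu R c d * f d else 0 :=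
        Finset.sum_comm
    _ = ∑ d ∈ univ, (∑ c ∈ Finset.Icc x d, IncidenceAlgebra.mu R c d) * f d := by
        refine Finset.sum_congr rfl fun d _ => ?_
        rw [Finset.sum_mul, ← Finset.sum_filter]
        congr 1
        · ext c; simp [Finset.mem_Icc]
    _ = ∑ d ∈ univ, (if x = d then (1:R) else 0) * f d := by
        refine Finset.sum_congr rfl fun d _ => ?_
        congr 1
        have h1 : (IncidenceAlgebra.zeta R * IncidenceAlgebra.mu R : IncidenceAlgebra R L) x d
            = if x = d then 1 else 0 := by
          rw [IncidenceAlgebra.zeta_mul_mu]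
          exact IncidenceAlgebra.one_apply _ _
        rw [← h1, IncidenceAlgebra.mul_apply]
        refine Finset.sum_congr rfl fun c hc => ?_
        rw [Finset.mem_Icc] at hc
        rw [IncidenceAlgebra.zeta_apply, if_pos hc.1, one_mul]
    _ = f x := by simp

end

/-- **Dual Lindström.** For a finite lattice `L` and `f : L → R`, the matrix with entries
`f (a ⊔ b)` has determinant `∏ a, ∑ c ≥ a, μ(a,c) · f(c)`, where `μ` is the Möbius
function of `L`. -/
theorem det_join_matrix {L : Type*} [Fintype L] [Lattice L] [DecidableEq L]
    [LocallyFiniteOrder L] [DecidableRel ((· ≤ ·) : L → L → Prop)]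
    {R : Type*} [CommRing R] (f : L → R) :
    Matrix.det (Matrix.of fun a b : L => f (a ⊔ b)) =
      ∏ a : L, ∑ c ∈ Finset.univ.filter (a ≤ ·), IncidenceAlgebra.mu R a c * f c := by
  classical
  set g : L → R := fun a => ∑ c ∈ univ.filter (a ≤ ·), IncidenceAlgebra.mu R a c * f c with hg
  set Z : Matrix L L R := Matrix.of fun a c : L => if a ≤ c then (1:R) else 0 with hZ
  have hM : (Matrix.of fun a b : L => f (a ⊔ b)) = Z * Matrix.diagonal g * Zᵀ := by
    ext a b
    rw [Matrix.mul_apply]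
    have hent : ∀ j : L, (Z * Matrix.diagonal g) a j * Zᵀ j b
        = if a ⊔ b ≤ j then g j else 0 := by
      intro j
      rw [Matrix.mul_diagonal, Matrix.transpose_apply]
      simp only [hZ, Matrix.of_apply]
      by_cases h1 : a ≤ j <;> by_cases h2 : b ≤ j <;>
        simp [h1, h2, sup_le_iff]
    rw [Finset.sum_congr rfl fun j _ => hent j, ← Finset.sum_filter]
    exact (key_inv f (a ⊔ b)).symm
  rw [hM, Matrix.det_mul, Matrix.det_mul, Matrix.det_transpose,
    zeta_det_one, Matrix.det_diagonal, one_mul, mul_one]
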